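/- arXiv:2010.15505 — 2 statements merged into one kernel-verified Lean document; each statement's English description precedes it below -/
import Mathlib

section
/- Functional relation (II): for all real characteristics a, c, b, d and all complex u, v, θ[a,c;b,d](u,v) · θ[a,c;0,0](u,v) = Σ_{(ε,δ)∈{0,1}²} Θ[a+ε, c+δ; b, d](2u, 2v) · Θ[ε, δ; b, d](0, 0). -/
set_option maxHeartbeats 1600000

open Complex

/-- Genus-two theta function with real characteristics `a c b d`
(upper characteristics `a, c`, lower characteristics `b, d`),
moduli `τ₁ τ₂ τ₁₂` and complex arguments `x y`. -/
noncomputable def theta (τ₁ τ₂ τ₁₂ : ℂ) (a c b d : ℝ) (x y : ℂ) : ℂ :=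
  ∑' p : ℤ × ℤ,
    Complex.exp
      ((Real.pi : ℂ) * Complex.I *
          (τ₁ * ((p.1 : ℂ) + (a : ℂ) / 2) ^ 2 + τ₂ * ((p.2 : ℂ) + (c : ℂ) / 2) ^ 2 +
            2 * τ₁₂ * ((p.1 : ℂ) + (a : ℂ) / 2) * ((p.2 : ℂ) + (c : ℂ) / 2)) +
        2 * (Real.pi : ℂ) * Complex.I *
          (((p.1 : ℂ) + (a : ℂ) / 2) * (x + (b : ℂ) / 2) +
            ((p.2 : ℂ) + (c : ℂ) / 2) * (y + (d : ℂ) / 2)))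

/-- The same theta function with doubled moduli `2τ₁, 2τ₂, 2τ₁₂`. -/
noncomputable def Theta2 (τ₁ τ₂ τ₁₂ : ℂ) (a c b d : ℝ) (x y : ℂ) : ℂ :=
  theta (2 * τ₁) (2 * τ₂) (2 * τ₁₂) a c b d x y

/-- One term of the genus-two theta series. -/
noncomputable def thetaTerm (τ₁ τ₂ τ₁₂ : ℂ) (a c b d : ℝ) (x y : ℂ) (p : ℤ × ℤ) : ℂ :=
  Complex.exp
      ((Real.pi : ℂ) * Complex.I *
          (τ₁ * ((p.1 : ℂ) + (a : ℂ) / 2) ^ 2 + τ₂ * ((p.2 : ℂ) + (c : ℂ) / 2) ^ 2 +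
            2 * τ₁₂ * ((p.1 : ℂ) + (a : ℂ) / 2) * ((p.2 : ℂ) + (c : ℂ) / 2)) +
        2 * (Real.pi : ℂ) * Complex.I *
          (((p.1 : ℂ) + (a : ℂ) / 2) * (x + (b : ℂ) / 2) +
            ((p.2 : ℂ) + (c : ℂ) / 2) * (y + (d : ℂ) / 2)))

lemma theta_eq_tsum (τ₁ τ₂ τ₁₂ : ℂ) (a c b d : ℝ) (x y : ℂ) :
    theta τ₁ τ₂ τ₁₂ a c b d x y = ∑' p : ℤ × ℤ, thetaTerm τ₁ τ₂ τ₁₂ a c b d x y p := rfl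

private lemma summable_exp_neg_sq {c : ℝ} (hc : 0 < c) :
    Summable fun n : ℤ => Real.exp (-c * (n:ℝ)^2) := by
  have key : Summable fun n : ℕ => Real.exp (-c * (n:ℝ)^2) := by
    refine Summable.of_nonneg_of_le (fun n => (Real.exp_pos _).le) (fun n => ?_)
      (summable_geometric_of_lt_one (Real.exp_pos (-c)).le
        (Real.exp_lt_one_iff.2 (by linarith)))
    rw [← Real.exp_nat_mul]
    apply Real.exp_le_exp.2
    have h : (n:ℝ) ≤ (n:ℝ)^2 := by exact_mod_cast Nat.le_self_pow two_ne_zero n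
    nlinarith [hc, h]
  apply Summable.of_nat_of_neg
  · exact key.congr fun n => by push_cast; ring_nf
  · exact key.congr fun n => by push_cast; ring_nf

private lemma quad_lower {Y₁ Y₂ Y₁₂ : ℝ} (h₁ : 0 < Y₁) (h₂ : 0 < Y₂) (h : Y₁₂^2 < Y₁*Y₂) :
    ∃ ρ > 0, ∀ X₁ X₂ : ℝ, ρ*(X₁^2+X₂^2) ≤ Y₁*X₁^2+Y₂*X₂^2+2*Y₁₂*X₁*X₂ := by
  refine ⟨(Y₁*Y₂ - Y₁₂^2)/(Y₁+Y₂), div_pos (by linarith) (by linarith), fun X₁ X₂ => ?_⟩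
  rw [div_mul_eq_mul_div, div_le_iff₀ (by linarith)]
  have hA : (0:ℝ) < Y₁^2+Y₁₂^2 := by positivity
  nlinarith [sq_nonneg ((Y₁^2+Y₁₂^2)*X₁ + Y₁₂*(Y₁+Y₂)*X₂), sq_nonneg ((Y₁*Y₂-Y₁₂^2)*X₂), hA]

lemma norm_thetaTerm (τ₁ τ₂ τ₁₂ : ℂ) (a c b d : ℝ) (x y : ℂ) (p : ℤ × ℤ) :
    ‖thetaTerm τ₁ τ₂ τ₁₂ a c b d x y p‖ =
      Real.exp (-Real.pi * (τ₁.im * ((p.1:ℝ)+a/2)^2 + τ₂.im * ((p.2:ℝ)+c/2)^2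
        + 2*τ₁₂.im*((p.1:ℝ)+a/2)*((p.2:ℝ)+c/2))
        - 2*Real.pi * (((p.1:ℝ)+a/2) * x.im + ((p.2:ℝ)+c/2) * y.im)) := by
  rw [thetaTerm, Complex.norm_exp]
  congr 1
  have e1 : (p.1 : ℂ) + (a : ℂ) / 2 = (((p.1:ℝ) + a/2 : ℝ) : ℂ) := by push_cast; ring
  have e2 : (p.2 : ℂ) + (c : ℂ) / 2 = (((p.2:ℝ) + c/2 : ℝ) : ℂ) := by push_cast; ring
  have e3 : x + (b:ℂ)/2 = x + (((b/2 : ℝ)) : ℂ) := by push_cast; ring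
  have e4 : y + (d:ℂ)/2 = y + (((d/2 : ℝ)) : ℂ) := by push_cast; ring
  rw [e1, e2, e3, e4]
  simp [Complex.add_re, Complex.mul_re, Complex.mul_im, Complex.add_im, pow_two]
  ring

lemma thetaTerm_norm_summable {τ₁ τ₂ τ₁₂ : ℂ}
    (hτ₁ : 0 < τ₁.im) (hτ₂ : 0 < τ₂.im) (hτ : τ₁₂.im ^ 2 < τ₁.im * τ₂.im)
    (a c b d : ℝ) (x y : ℂ) :
    Summable fun p : ℤ × ℤ => ‖thetaTerm τ₁ τ₂ τ₁₂ a c b d x y p‖ := by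
  obtain ⟨ρ, hρ, hQ⟩ := quad_lower hτ₁ hτ₂ hτ
  have hπ := Real.pi_pos
  have hbound : ∀ p : ℤ × ℤ, ‖thetaTerm τ₁ τ₂ τ₁₂ a c b d x y p‖ ≤
      Real.exp (2*Real.pi*(x.im^2+y.im^2)/ρ + Real.pi*ρ*(a^2+c^2)/8) *
        (Real.exp (-(Real.pi*ρ/4) * (p.1:ℝ)^2) *
          Real.exp (-(Real.pi*ρ/4) * (p.2:ℝ)^2)) := by
    intro p
    rw [norm_thetaTerm, ← Real.exp_add, ← Real.exp_add, Real.exp_le_exp]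
    have hρ0 : ρ ≠ 0 := ne_of_gt hρ
    have h := hQ ((p.1:ℝ) + a/2) ((p.2:ℝ) + c/2)
    rw [show (2*Real.pi*(x.im^2+y.im^2)/ρ + Real.pi*ρ*(a^2+c^2)/8) + (-(Real.pi*ρ/4) * (p.1:ℝ)^2 + -(Real.pi*ρ/4) * (p.2:ℝ)^2)
        = (ρ*(Real.pi*ρ*(a^2+c^2)/8 + (-(Real.pi*ρ/4) * (p.1:ℝ)^2 + -(Real.pi*ρ/4) * (p.2:ℝ)^2))
           + 2*Real.pi*(x.im^2+y.im^2))/ρ from by field_simp; ring,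
      le_div_iff₀ hρ]
    have hA3 := mul_le_mul_of_nonneg_left h (le_of_lt (mul_pos hπ hρ))
    nlinarith [mul_nonneg hπ.le (sq_nonneg (ρ*((p.1:ℝ)+a/2)+2*x.im)),
      mul_nonneg hπ.le (sq_nonneg (ρ*((p.2:ℝ)+c/2)+2*y.im)),
      mul_nonneg (mul_nonneg hπ.le (mul_nonneg hρ.le hρ.le)) (sq_nonneg ((p.1:ℝ)+a)),
      mul_nonneg (mul_nonneg hπ.le (mul_nonneg hρ.le hρ.le)) (sq_nonneg ((p.2:ℝ)+c)),
      hA3]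
  have hs : Summable fun p : ℤ × ℤ =>
      Real.exp (2*Real.pi*(x.im^2+y.im^2)/ρ + Real.pi*ρ*(a^2+c^2)/8) *
        (Real.exp (-(Real.pi*ρ/4) * (p.1:ℝ)^2) *
          Real.exp (-(Real.pi*ρ/4) * (p.2:ℝ)^2)) := by
    apply Summable.mul_left
    exact Summable.mul_of_nonneg (summable_exp_neg_sq (by positivity))
      (summable_exp_neg_sq (by positivity)) (fun _ => (Real.exp_pos _).le)
      (fun _ => (Real.exp_pos _).le)
  exact Summable.of_nonneg_of_le (fun _ => norm_nonneg _) hbound hs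

def pairEquiv : ((Fin 2 × Fin 2) × ((ℤ × ℤ) × (ℤ × ℤ))) ≃ ((ℤ × ℤ) × (ℤ × ℤ)) where
  toFun x := ((x.2.1.1 + x.2.2.1 + (x.1.1 : ℕ), x.2.1.2 + x.2.2.2 + (x.1.2 : ℕ)),
              (x.2.1.1 - x.2.2.1, x.2.1.2 - x.2.2.2))
  invFun q := ((⟨((q.1.1 + q.2.1) % 2).toNat, by omega⟩, ⟨((q.1.2 + q.2.2) % 2).toNat, by omega⟩),
               (((q.1.1 + q.2.1) / 2, (q.1.2 + q.2.2) / 2),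
                ((q.1.1 + q.2.1) / 2 - q.2.1, (q.1.2 + q.2.2) / 2 - q.2.2)))
  left_inv := by
    rintro ⟨⟨⟨e, he⟩, ⟨f, hf⟩⟩, ⟨⟨M, N⟩, ⟨M', N'⟩⟩⟩
    simp only [Prod.mk.injEq, Fin.mk.injEq]
    refine ⟨⟨?_, ?_⟩, ⟨?_, ?_⟩, ?_, ?_⟩ <;> omega
  right_inv := by
    rintro ⟨⟨m, n⟩, ⟨m', n'⟩⟩
    simp only [Prod.mk.injEq]
    refine ⟨⟨?_, ?_⟩, ?_, ?_⟩ <;> omega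

lemma term_identity (τ₁ τ₂ τ₁₂ : ℂ) (a c b d : ℝ) (u v : ℂ) (ε δ : Fin 2) (M N M' N' : ℤ) :
    thetaTerm τ₁ τ₂ τ₁₂ a c b d u v (M + M' + ((ε:ℕ):ℤ), N + N' + ((δ:ℕ):ℤ)) *
      thetaTerm τ₁ τ₂ τ₁₂ a c 0 0 u v (M - M', N - N') =
    thetaTerm (2*τ₁) (2*τ₂) (2*τ₁₂) (a + ((ε:ℕ):ℝ)) (c + ((δ:ℕ):ℝ)) b d (2*u) (2*v) (M, N) *
      thetaTerm (2*τ₁) (2*τ₂) (2*τ₁₂) ((ε:ℕ):ℝ) ((δ:ℕ):ℝ) b d 0 0 (M', N') := by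
  rw [thetaTerm, thetaTerm, thetaTerm, thetaTerm, ← Complex.exp_add, ← Complex.exp_add]
  congr 1
  push_cast
  ring

theorem functional_relation_II (τ₁ τ₂ τ₁₂ : ℂ)
    (hτ₁ : 0 < τ₁.im) (hτ₂ : 0 < τ₂.im) (hτ : τ₁₂.im ^ 2 < τ₁.im * τ₂.im)
    (a c b d : ℝ) (u v : ℂ) :
    theta τ₁ τ₂ τ₁₂ a c b d u v * theta τ₁ τ₂ τ₁₂ a c 0 0 u v =
      ∑ ε ∈ Finset.range 2, ∑ δ ∈ Finset.range 2,
        Theta2 τ₁ τ₂ τ₁₂ (a + ε) (c + δ) b d (2 * u) (2 * v) *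
          Theta2 τ₁ τ₂ τ₁₂ ε δ b d 0 0 := by
  have him : ∀ z : ℂ, (2*z).im = 2*z.im := fun z => by simp [Complex.mul_im]
  have h2τ₁ : 0 < (2*τ₁).im := by rw [him]; linarith
  have h2τ₂ : 0 < (2*τ₂).im := by rw [him]; linarith
  have h2τ : (2*τ₁₂).im ^ 2 < (2*τ₁).im * (2*τ₂).im := by
    rw [him, him, him]; nlinarith
  have S1 := thetaTerm_norm_summable hτ₁ hτ₂ hτ a c b d u v
  have S2 := thetaTerm_norm_summable hτ₁ hτ₂ hτ a c 0 0 u v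
  rw [theta_eq_tsum, theta_eq_tsum, tsum_mul_tsum_of_summable_norm S1 S2]
  have hsum : Summable fun x : (Fin 2 × Fin 2) × ((ℤ × ℤ) × (ℤ × ℤ)) =>
      thetaTerm τ₁ τ₂ τ₁₂ a c b d u v (pairEquiv x).1 *
        thetaTerm τ₁ τ₂ τ₁₂ a c 0 0 u v (pairEquiv x).2 :=
    pairEquiv.summable_iff.mpr ((S1.mul_norm S2).of_norm)
  rw [← pairEquiv.tsum_eq (fun z => thetaTerm τ₁ τ₂ τ₁₂ a c b d u v z.1 *
        thetaTerm τ₁ τ₂ τ₁₂ a c 0 0 u v z.2),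
    Summable.tsum_prod' hsum hsum.prod_factor, tsum_fintype, Fintype.sum_prod_type,
    Finset.sum_range fun ε : ℕ => ∑ δ ∈ Finset.range 2,
      Theta2 τ₁ τ₂ τ₁₂ (a + ε) (c + δ) b d (2 * u) (2 * v) * Theta2 τ₁ τ₂ τ₁₂ ε δ b d 0 0]
  refine Finset.sum_congr rfl fun ε _ => ?_
  rw [Finset.sum_range fun δ : ℕ =>
      Theta2 τ₁ τ₂ τ₁₂ (a + ε) (c + δ) b d (2 * u) (2 * v) * Theta2 τ₁ τ₂ τ₁₂ ε δ b d 0 0]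
  refine Finset.sum_congr rfl fun δ _ => ?_
  rw [Theta2, Theta2, theta_eq_tsum, theta_eq_tsum,
    tsum_mul_tsum_of_summable_norm
      (thetaTerm_norm_summable h2τ₁ h2τ₂ h2τ (a + (ε:ℕ)) (c + (δ:ℕ)) b d (2*u) (2*v))
      (thetaTerm_norm_summable h2τ₁ h2τ₂ h2τ ((ε:ℕ)) ((δ:ℕ)) b d 0 0)]
  refine tsum_congr fun PQ => ?_
  obtain ⟨⟨M, N⟩, ⟨M', N'⟩⟩ := PQ
  simpa only [pairEquiv, Equiv.coe_fn_mk] using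
    term_identity τ₁ τ₂ τ₁₂ a c b d u v ε δ M N M' N'
end

section
/- Inverse functional relation for lower characteristic (0,1): let α = Θ[0,0;0,1](0,0) and β = Θ[1,0;0,1](0,0). Then for all complex u, v, Θ[0,0;0,1](2u,2v) · (α² − β²) = θ[0,0;0,1](u,v) · θ[0,0;0,0](u,v) · α − θ[1,0;0,1](u,v) · θ[1,0;0,0](u,v) · β. -/
open Complex

/-- Single term of the genus-two theta series. -/
noncomputable def th (τ₁ τ₂ τ₁₂ : ℂ) (a c b d : ℝ) (x y : ℂ) (p : ℤ × ℤ) : ℂ :=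
  Complex.exp
    ((Real.pi : ℂ) * Complex.I *
        (τ₁ * ((p.1 : ℂ) + (a : ℂ) / 2) ^ 2 + τ₂ * ((p.2 : ℂ) + (c : ℂ) / 2) ^ 2 +
          2 * τ₁₂ * ((p.1 : ℂ) + (a : ℂ) / 2) * ((p.2 : ℂ) + (c : ℂ) / 2)) +
      2 * (Real.pi : ℂ) * Complex.I *
        (((p.1 : ℂ) + (a : ℂ) / 2) * (x + (b : ℂ) / 2) +
          ((p.2 : ℂ) + (c : ℂ) / 2) * (y + (d : ℂ) / 2)))

lemma theta_eq (τ₁ τ₂ τ₁₂ : ℂ) (a c b d : ℝ) (x y : ℂ) :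
    theta τ₁ τ₂ τ₁₂ a c b d x y = ∑' p : ℤ × ℤ, th τ₁ τ₂ τ₁₂ a c b d x y p := rfl

lemma norm_th (τ₁ τ₂ τ₁₂ : ℂ) (a c b d : ℝ) (x y : ℂ) (p : ℤ × ℤ) :
    ‖th τ₁ τ₂ τ₁₂ a c b d x y p‖ =
      Real.exp (-(Real.pi) *
          (τ₁.im * ((p.1 : ℝ) + a / 2) ^ 2 + τ₂.im * ((p.2 : ℝ) + c / 2) ^ 2 +
            2 * τ₁₂.im * ((p.1 : ℝ) + a / 2) * ((p.2 : ℝ) + c / 2)) -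
        2 * Real.pi * (((p.1 : ℝ) + a / 2) * x.im + ((p.2 : ℝ) + c / 2) * y.im)) := by
  rw [th, Complex.norm_exp]
  congr 1
  have h1 : ((p.1 : ℂ) + (a : ℂ) / 2) = (((p.1 : ℝ) + a / 2 : ℝ) : ℂ) := by push_cast; ring
  have h2 : ((p.2 : ℂ) + (c : ℂ) / 2) = (((p.2 : ℝ) + c / 2 : ℝ) : ℂ) := by push_cast; ring
  rw [h1, h2]
  set r₁ : ℝ := (p.1 : ℝ) + a / 2
  set r₂ : ℝ := (p.2 : ℝ) + c / 2
  have : ((Real.pi : ℂ) * Complex.I *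
        (τ₁ * (r₁ : ℂ) ^ 2 + τ₂ * (r₂ : ℂ) ^ 2 + 2 * τ₁₂ * (r₁ : ℂ) * (r₂ : ℂ)) +
      2 * (Real.pi : ℂ) * Complex.I *
        ((r₁ : ℂ) * (x + (b : ℂ) / 2) + (r₂ : ℂ) * (y + (d : ℂ) / 2)))
      = ((Real.pi : ℝ) : ℂ) * ((r₁ ^ 2 : ℝ) * τ₁ + (r₂ ^ 2 : ℝ) * τ₂ +
          ((2 * r₁ * r₂ : ℝ)) * τ₁₂) * Complex.I
        + ((2 * Real.pi * r₁ : ℝ) : ℂ) * (x + ((b/2 : ℝ) : ℂ)) * Complex.I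
        + ((2 * Real.pi * r₂ : ℝ) : ℂ) * (y + ((d/2 : ℝ) : ℂ)) * Complex.I := by
    push_cast; ring
  rw [this]
  simp only [Complex.add_re, Complex.mul_I_re, Complex.mul_im, Complex.ofReal_re,
    Complex.ofReal_im, Complex.add_im, Complex.mul_re, Complex.I_re, Complex.I_im]
  ring

lemma summable_g (δ c e : ℝ) (hδ : 0 < δ) :
    Summable fun m : ℤ => Real.exp (-δ * ((m : ℝ) + e) ^ 2 + c * ((m : ℝ) + e)) := by
  have hπ := Real.pi_pos
  set τ : ℂ := ⟨0, δ / Real.pi⟩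
  set z : ℂ := ⟨0, -(c - 2 * δ * e) / (2 * Real.pi)⟩
  have hτ : Summable (jacobiTheta₂_term · z τ) :=
    (summable_jacobiTheta₂_term_iff z τ).mpr (by positivity)
  rw [← summable_norm_iff (E := ℂ)] at hτ
  simp only [norm_jacobiTheta₂_term] at hτ
  have := hτ.mul_left (Real.exp (-δ * e ^ 2 + c * e))
  refine this.congr fun m => ?_
  rw [← Real.exp_add]
  congr 1
  rw [show τ.im = δ / Real.pi from rfl, show z.im = -(c - 2 * δ * e) / (2 * Real.pi) from rfl]
  field_simp
  ring

lemma summable_norm_th (τ₁ τ₂ τ₁₂ : ℂ)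
    (hτ₁ : 0 < τ₁.im) (hτ₂ : 0 < τ₂.im) (hτ : τ₁₂.im ^ 2 < τ₁.im * τ₂.im)
    (a c b d : ℝ) (x y : ℂ) :
    Summable fun p : ℤ × ℤ => ‖th τ₁ τ₂ τ₁₂ a c b d x y p‖ := by
  have hπ := Real.pi_pos
  set t₁ := τ₁.im; set t₂ := τ₂.im; set t₁₂ := τ₁₂.im
  set δ : ℝ := (t₁ * t₂ - t₁₂ ^ 2) / (t₁ + t₂) with hδdef
  have hδ : 0 < δ := div_pos (by linarith) (by linarith)
  have hg₁ := summable_g (Real.pi * δ) (-(2 * Real.pi * x.im)) (a / 2) (by positivity)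
  have hg₂ := summable_g (Real.pi * δ) (-(2 * Real.pi * y.im)) (c / 2) (by positivity)
  have hprod := hg₁.mul_of_nonneg hg₂ (fun m => (Real.exp_pos _).le) (fun m => (Real.exp_pos _).le)
  refine Summable.of_nonneg_of_le (fun p => norm_nonneg _) (fun p => ?_) hprod
  rw [norm_th, ← Real.exp_add]
  rw [Real.exp_le_exp]
  set r₁ : ℝ := (p.1 : ℝ) + a / 2
  set r₂ : ℝ := (p.2 : ℝ) + c / 2
  have key : δ * (r₁ ^ 2 + r₂ ^ 2) ≤
      t₁ * r₁ ^ 2 + t₂ * r₂ ^ 2 + 2 * t₁₂ * r₁ * r₂ := by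
    rw [hδdef, div_mul_eq_mul_div, div_le_iff₀ (by linarith)]
    nlinarith [sq_nonneg (t₁ * r₁ + t₁₂ * r₂), sq_nonneg (t₂ * r₂ + t₁₂ * r₁)]
  have := mul_le_mul_of_nonneg_left key hπ.le
  nlinarith [this]

lemma summable_th (τ₁ τ₂ τ₁₂ : ℂ)
    (hτ₁ : 0 < τ₁.im) (hτ₂ : 0 < τ₂.im) (hτ : τ₁₂.im ^ 2 < τ₁.im * τ₂.im)
    (a c b d : ℝ) (x y : ℂ) :
    Summable fun p : ℤ × ℤ => th τ₁ τ₂ τ₁₂ a c b d x y p :=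
  (summable_norm_th τ₁ τ₂ τ₁₂ hτ₁ hτ₂ hτ a c b d x y).of_norm

/-- Reindexing bijection for the even-characteristic product. -/
def E0 : (Bool × Bool) × ((ℤ × ℤ) × (ℤ × ℤ)) ≃ (ℤ × ℤ) × (ℤ × ℤ) where
  toFun w := ((w.2.1.1 + w.2.2.1 + (cond w.1.1 1 0), w.2.1.2 + w.2.2.2 + (cond w.1.2 1 0)),
    (w.2.1.1 - w.2.2.1, w.2.1.2 - w.2.2.2))
  invFun z := ((decide ((z.1.1 + z.2.1) % 2 = 1), decide ((z.1.2 + z.2.2) % 2 = 1)),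
    (((z.1.1 + z.2.1) / 2, (z.1.2 + z.2.2) / 2), ((z.1.1 - z.2.1) / 2, (z.1.2 - z.2.2) / 2)))
  left_inv := by
    rintro ⟨⟨b₁, b₂⟩, ⟨⟨r, s⟩, ⟨r', s'⟩⟩⟩
    cases b₁ <;> cases b₂ <;>
      simp only [cond_true, cond_false, Prod.mk.injEq, decide_eq_true_eq,
        decide_eq_false_iff_not] <;>
      refine ⟨⟨?_, ?_⟩, ⟨?_, ?_⟩, ?_, ?_⟩ <;> omega
  right_inv := by
    rintro ⟨⟨m, n⟩, ⟨m', n'⟩⟩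
    simp only [Bool.cond_decide, Prod.mk.injEq]
    refine ⟨⟨?_, ?_⟩, ⟨?_, ?_⟩⟩ <;> (try split_ifs) <;> omega

/-- Reindexing bijection for the odd-characteristic product. -/
def E1 : (Bool × Bool) × ((ℤ × ℤ) × (ℤ × ℤ)) ≃ (ℤ × ℤ) × (ℤ × ℤ) where
  toFun w := ((w.2.1.1 + w.2.2.1, w.2.1.2 + w.2.2.2 + (cond w.1.2 1 0)),
    (w.2.1.1 - w.2.2.1 - 1 + (cond w.1.1 1 0), w.2.1.2 - w.2.2.2))
  invFun z := ((decide ((z.1.1 + z.2.1) % 2 = 0), decide ((z.1.2 + z.2.2) % 2 = 1)),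
    (((z.1.1 + z.2.1 + 1) / 2, (z.1.2 + z.2.2) / 2), ((z.1.1 - z.2.1) / 2, (z.1.2 - z.2.2) / 2)))
  left_inv := by
    rintro ⟨⟨b₁, b₂⟩, ⟨⟨r, s⟩, ⟨r', s'⟩⟩⟩
    cases b₁ <;> cases b₂ <;>
      simp only [cond_true, cond_false, Prod.mk.injEq, decide_eq_true_eq,
        decide_eq_false_iff_not] <;>
      refine ⟨⟨?_, ?_⟩, ⟨?_, ?_⟩, ?_, ?_⟩ <;> omega
  right_inv := by
    rintro ⟨⟨m, n⟩, ⟨m', n'⟩⟩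
    simp only [Bool.cond_decide, Prod.mk.injEq]
    refine ⟨⟨?_, ?_⟩, ⟨?_, ?_⟩⟩ <;> (try split_ifs) <;> omega

lemma key0 (τ₁ τ₂ τ₁₂ u v : ℂ) (e₁ e₂ r s r' s' : ℤ) :
    th τ₁ τ₂ τ₁₂ 0 0 0 1 u v (r + r' + e₁, s + s' + e₂) *
      th τ₁ τ₂ τ₁₂ 0 0 0 0 u v (r - r', s - s') =
    th (2 * τ₁) (2 * τ₂) (2 * τ₁₂) (e₁ : ℝ) (e₂ : ℝ) 0 1 (2 * u) (2 * v) (r, s) *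
      th (2 * τ₁) (2 * τ₂) (2 * τ₁₂) (e₁ : ℝ) (e₂ : ℝ) 0 1 0 0 (r', s') := by
  simp only [th]
  rw [← Complex.exp_add, ← Complex.exp_add]
  congr 1
  push_cast
  ring

lemma key1 (τ₁ τ₂ τ₁₂ u v : ℂ) (e₁ e₂ r s r' s' : ℤ) :
    th τ₁ τ₂ τ₁₂ 1 0 0 1 u v (r + r', s + s' + e₂) *
      th τ₁ τ₂ τ₁₂ 1 0 0 0 u v (r - r' - 1 + e₁, s - s') =
    th (2 * τ₁) (2 * τ₂) (2 * τ₁₂) (e₁ : ℝ) (e₂ : ℝ) 0 1 (2 * u) (2 * v) (r, s) *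
      th (2 * τ₁) (2 * τ₂) (2 * τ₁₂) ((1 - e₁ : ℤ) : ℝ) (e₂ : ℝ) 0 1 0 0 (r', s') := by
  simp only [th]
  rw [← Complex.exp_add, ← Complex.exp_add]
  congr 1
  push_cast
  ring

def NE (k : ℤ) : ℤ × ℤ ≃ ℤ × ℤ where
  toFun p := (-p.1 - k, -p.2 - 1)
  invFun p := (-p.1 - k, -p.2 - 1)
  left_inv := by rintro ⟨r, s⟩; simp [Prod.ext_iff]
  right_inv := by rintro ⟨r, s⟩; simp [Prod.ext_iff]

lemma vanish (σ₁ σ₂ σ₁₂ : ℂ) (k : ℤ) :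
    ∑' p : ℤ × ℤ, th σ₁ σ₂ σ₁₂ (k : ℝ) 1 0 1 0 0 p = 0 := by
  set f : ℤ × ℤ → ℂ := th σ₁ σ₂ σ₁₂ (k : ℝ) 1 0 1 0 0 with hf
  have hneg : ∀ p : ℤ × ℤ, f (NE k p) = -f p := by
    rintro ⟨r, s⟩
    have h1 : f (NE k (r, s)) = Complex.exp
        (((Real.pi : ℂ) * Complex.I *
            (σ₁ * ((r : ℂ) + (k : ℂ) / 2) ^ 2 + σ₂ * ((s : ℂ) + (1 : ℂ) / 2) ^ 2 +
              2 * σ₁₂ * ((r : ℂ) + (k : ℂ) / 2) * ((s : ℂ) + (1 : ℂ) / 2)) +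
          2 * (Real.pi : ℂ) * Complex.I *
            (((r : ℂ) + (k : ℂ) / 2) * (0 + (0 : ℂ) / 2) +
              ((s : ℂ) + (1 : ℂ) / 2) * (0 + (1 : ℂ) / 2)))
          + (Real.pi : ℂ) * Complex.I + ((-s - 1 : ℤ) : ℂ) * (2 * (Real.pi : ℂ) * Complex.I)) := by
      simp only [hf, th, NE, Equiv.coe_fn_mk]
      congr 1
      push_cast
      ring
    have h2 : f (r, s) = Complex.exp
        (((Real.pi : ℂ) * Complex.I *
            (σ₁ * ((r : ℂ) + (k : ℂ) / 2) ^ 2 + σ₂ * ((s : ℂ) + (1 : ℂ) / 2) ^ 2 +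
              2 * σ₁₂ * ((r : ℂ) + (k : ℂ) / 2) * ((s : ℂ) + (1 : ℂ) / 2)) +
          2 * (Real.pi : ℂ) * Complex.I *
            (((r : ℂ) + (k : ℂ) / 2) * (0 + (0 : ℂ) / 2) +
              ((s : ℂ) + (1 : ℂ) / 2) * (0 + (1 : ℂ) / 2)))) := by
      simp only [hf, th]
      norm_num
    rw [h1, Complex.exp_add, Complex.exp_add, Complex.exp_int_mul_two_pi_mul_I,
      Complex.exp_pi_mul_I, h2]
    ring
  have h1 : ∑' p, f p = ∑' p, f (NE k p) := ((NE k).tsum_eq f).symm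
  have h2 : ∑' p, f (NE k p) = -∑' p, f p := by
    calc ∑' p, f (NE k p) = ∑' p, -f p := tsum_congr hneg
    _ = -∑' p, f p := tsum_neg
  have h3 := h1.trans h2
  linear_combination ((1 : ℂ) / 2) * h3

lemma doubled_im (τ : ℂ) : (2 * τ).im = 2 * τ.im := by simp

lemma P1 (τ₁ τ₂ τ₁₂ : ℂ) (hτ₁ : 0 < τ₁.im) (hτ₂ : 0 < τ₂.im)
    (hτ : τ₁₂.im ^ 2 < τ₁.im * τ₂.im) (u v : ℂ) :
    theta τ₁ τ₂ τ₁₂ 0 0 0 1 u v * theta τ₁ τ₂ τ₁₂ 0 0 0 0 u v =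
      ∑ b : Bool × Bool,
        theta (2 * τ₁) (2 * τ₂) (2 * τ₁₂) (cond b.1 1 0) (cond b.2 1 0) 0 1 (2 * u) (2 * v) *
          theta (2 * τ₁) (2 * τ₂) (2 * τ₁₂) (cond b.1 1 0) (cond b.2 1 0) 0 1 0 0 := by
  have h2a : 0 < (2 * τ₁).im := by rw [doubled_im]; linarith
  have h2b : 0 < (2 * τ₂).im := by rw [doubled_im]; linarith
  have h2c : (2 * τ₁₂).im ^ 2 < (2 * τ₁).im * (2 * τ₂).im := by
    rw [doubled_im, doubled_im, doubled_im]; nlinarith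
  have hn1 := summable_norm_th τ₁ τ₂ τ₁₂ hτ₁ hτ₂ hτ 0 0 0 1 u v
  have hn0 := summable_norm_th τ₁ τ₂ τ₁₂ hτ₁ hτ₂ hτ 0 0 0 0 u v
  set F : (ℤ × ℤ) × (ℤ × ℤ) → ℂ := fun z =>
    th τ₁ τ₂ τ₁₂ 0 0 0 1 u v z.1 * th τ₁ τ₂ τ₁₂ 0 0 0 0 u v z.2 with hF
  have hw : Summable fun w : (Bool × Bool) × ((ℤ × ℤ) × (ℤ × ℤ)) => F (E0 w) :=
    E0.summable_iff.mpr (summable_mul_of_summable_norm hn1 hn0)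
  calc theta τ₁ τ₂ τ₁₂ 0 0 0 1 u v * theta τ₁ τ₂ τ₁₂ 0 0 0 0 u v
      = ∑' z : (ℤ × ℤ) × (ℤ × ℤ), F z := by
        rw [theta_eq, theta_eq]; exact tsum_mul_tsum_of_summable_norm hn1 hn0
    _ = ∑' w : (Bool × Bool) × ((ℤ × ℤ) × (ℤ × ℤ)), F (E0 w) := (E0.tsum_eq F).symm
    _ = ∑' b : Bool × Bool, ∑' x : (ℤ × ℤ) × (ℤ × ℤ), F (E0 (b, x)) := hw.tsum_prod
    _ = ∑ b : Bool × Bool, ∑' x : (ℤ × ℤ) × (ℤ × ℤ), F (E0 (b, x)) := tsum_fintype _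
    _ = _ := by
      refine Finset.sum_congr rfl fun b _ => ?_
      obtain ⟨b₁, b₂⟩ := b
      have hG := summable_norm_th (2 * τ₁) (2 * τ₂) (2 * τ₁₂) h2a h2b h2c
        (cond b₁ 1 0) (cond b₂ 1 0) 0 1 (2 * u) (2 * v)
      have hH := summable_norm_th (2 * τ₁) (2 * τ₂) (2 * τ₁₂) h2a h2b h2c
        (cond b₁ 1 0) (cond b₂ 1 0) 0 1 0 0
      rw [theta_eq, theta_eq, tsum_mul_tsum_of_summable_norm hG hH]
      apply tsum_congr
      rintro ⟨⟨r, s⟩, ⟨r', s'⟩⟩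
      cases b₁ <;> cases b₂
      · simpa [hF, E0] using key0 τ₁ τ₂ τ₁₂ u v 0 0 r s r' s'
      · simpa [hF, E0] using key0 τ₁ τ₂ τ₁₂ u v 0 1 r s r' s'
      · simpa [hF, E0] using key0 τ₁ τ₂ τ₁₂ u v 1 0 r s r' s'
      · simpa [hF, E0] using key0 τ₁ τ₂ τ₁₂ u v 1 1 r s r' s'

lemma P2 (τ₁ τ₂ τ₁₂ : ℂ) (hτ₁ : 0 < τ₁.im) (hτ₂ : 0 < τ₂.im)
    (hτ : τ₁₂.im ^ 2 < τ₁.im * τ₂.im) (u v : ℂ) :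
    theta τ₁ τ₂ τ₁₂ 1 0 0 1 u v * theta τ₁ τ₂ τ₁₂ 1 0 0 0 u v =
      ∑ b : Bool × Bool,
        theta (2 * τ₁) (2 * τ₂) (2 * τ₁₂) (cond b.1 1 0) (cond b.2 1 0) 0 1 (2 * u) (2 * v) *
          theta (2 * τ₁) (2 * τ₂) (2 * τ₁₂) (cond b.1 0 1) (cond b.2 1 0) 0 1 0 0 := by
  have h2a : 0 < (2 * τ₁).im := by rw [doubled_im]; linarith
  have h2b : 0 < (2 * τ₂).im := by rw [doubled_im]; linarith
  have h2c : (2 * τ₁₂).im ^ 2 < (2 * τ₁).im * (2 * τ₂).im := by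
    rw [doubled_im, doubled_im, doubled_im]; nlinarith
  have hn1 := summable_norm_th τ₁ τ₂ τ₁₂ hτ₁ hτ₂ hτ 1 0 0 1 u v
  have hn0 := summable_norm_th τ₁ τ₂ τ₁₂ hτ₁ hτ₂ hτ 1 0 0 0 u v
  set F : (ℤ × ℤ) × (ℤ × ℤ) → ℂ := fun z =>
    th τ₁ τ₂ τ₁₂ 1 0 0 1 u v z.1 * th τ₁ τ₂ τ₁₂ 1 0 0 0 u v z.2 with hF
  have hw : Summable fun w : (Bool × Bool) × ((ℤ × ℤ) × (ℤ × ℤ)) => F (E1 w) :=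
    E1.summable_iff.mpr (summable_mul_of_summable_norm hn1 hn0)
  calc theta τ₁ τ₂ τ₁₂ 1 0 0 1 u v * theta τ₁ τ₂ τ₁₂ 1 0 0 0 u v
      = ∑' z : (ℤ × ℤ) × (ℤ × ℤ), F z := by
        rw [theta_eq, theta_eq]; exact tsum_mul_tsum_of_summable_norm hn1 hn0
    _ = ∑' w : (Bool × Bool) × ((ℤ × ℤ) × (ℤ × ℤ)), F (E1 w) := (E1.tsum_eq F).symm
    _ = ∑' b : Bool × Bool, ∑' x : (ℤ × ℤ) × (ℤ × ℤ), F (E1 (b, x)) := hw.tsum_prod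
    _ = ∑ b : Bool × Bool, ∑' x : (ℤ × ℤ) × (ℤ × ℤ), F (E1 (b, x)) := tsum_fintype _
    _ = _ := by
      refine Finset.sum_congr rfl fun b _ => ?_
      obtain ⟨b₁, b₂⟩ := b
      have hG := summable_norm_th (2 * τ₁) (2 * τ₂) (2 * τ₁₂) h2a h2b h2c
        (cond b₁ 1 0) (cond b₂ 1 0) 0 1 (2 * u) (2 * v)
      have hH := summable_norm_th (2 * τ₁) (2 * τ₂) (2 * τ₁₂) h2a h2b h2c
        (cond b₁ 0 1) (cond b₂ 1 0) 0 1 0 0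
      rw [theta_eq, theta_eq, tsum_mul_tsum_of_summable_norm hG hH]
      apply tsum_congr
      rintro ⟨⟨r, s⟩, ⟨r', s'⟩⟩
      cases b₁ <;> cases b₂
      · simpa [hF, E1] using key1 τ₁ τ₂ τ₁₂ u v 0 0 r s r' s'
      · simpa [hF, E1] using key1 τ₁ τ₂ τ₁₂ u v 0 1 r s r' s'
      · simpa [hF, E1] using key1 τ₁ τ₂ τ₁₂ u v 1 0 r s r' s'
      · simpa [hF, E1] using key1 τ₁ τ₂ τ₁₂ u v 1 1 r s r' s'

theorem inverse_functional_relation_01 (τ₁ τ₂ τ₁₂ : ℂ)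
    (hτ₁ : 0 < τ₁.im) (hτ₂ : 0 < τ₂.im) (hτ : τ₁₂.im ^ 2 < τ₁.im * τ₂.im)
    (u v : ℂ) :
    Theta2 τ₁ τ₂ τ₁₂ 0 0 0 1 (2 * u) (2 * v) *
        (Theta2 τ₁ τ₂ τ₁₂ 0 0 0 1 0 0 ^ 2 - Theta2 τ₁ τ₂ τ₁₂ 1 0 0 1 0 0 ^ 2) =
      theta τ₁ τ₂ τ₁₂ 0 0 0 1 u v * theta τ₁ τ₂ τ₁₂ 0 0 0 0 u v *
          Theta2 τ₁ τ₂ τ₁₂ 0 0 0 1 0 0 -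
        theta τ₁ τ₂ τ₁₂ 1 0 0 1 u v * theta τ₁ τ₂ τ₁₂ 1 0 0 0 u v *
          Theta2 τ₁ τ₂ τ₁₂ 1 0 0 1 0 0 := by
  have hv0 : theta (2 * τ₁) (2 * τ₂) (2 * τ₁₂) 0 1 0 1 0 0 = 0 := by
    have := vanish (2 * τ₁) (2 * τ₂) (2 * τ₁₂) 0
    rw [theta_eq]; simpa using this
  have hv1 : theta (2 * τ₁) (2 * τ₂) (2 * τ₁₂) 1 1 0 1 0 0 = 0 := by
    have := vanish (2 * τ₁) (2 * τ₂) (2 * τ₁₂) 1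
    rw [theta_eq]; simpa using this
  rw [P1 τ₁ τ₂ τ₁₂ hτ₁ hτ₂ hτ u v, P2 τ₁ τ₂ τ₁₂ hτ₁ hτ₂ hτ u v]
  simp only [Theta2, Fintype.sum_prod_type, Fintype.sum_bool, cond_true, cond_false,
    hv0, hv1, mul_zero, zero_mul, add_zero, zero_add, mul_one, one_mul]
  ring
end
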